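/- Let L be a continuously differentiable loss function of the filter vector w = (w^(1), ..., w^(N)) of an LCN that is invariant under the rescalings (w^(i), w^(j)) ↦ ((1/κ) w^(i), κ w^(j)) for all κ > 0 and i ≠ j. If w(t) solves the gradient flow dw/dt = -∇L(w(t)) on an interval I, then for every pair i, j the difference δ_ij(t) := ‖w^(i)(t)‖_2² - ‖w^(j)(t)‖_2² is constant in t. -/

import Mathlib

open scoped RealInnerProductSpace

lemma key_bal {N : ℕ} {k : Fin N → ℕ}
    {L : EuclideanSpace ℝ ((i : Fin N) × Fin (k i)) → ℝ}
    (hL : ContDiff ℝ 1 L)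
    (hinv : ∀ (i j : Fin N), i ≠ j → ∀ κ : ℝ, 0 < κ →
      ∀ u : EuclideanSpace ℝ ((i : Fin N) × Fin (k i)),
        L (WithLp.toLp 2 (fun p => if p.1 = i then u p / κ else if p.1 = j then κ * u p else u p)) = L u)
    (i j : Fin N) (hij : i ≠ j) (u : EuclideanSpace ℝ ((i : Fin N) × Fin (k i))) :
    ∑ n : Fin (k i), gradient L u ⟨i, n⟩ * u ⟨i, n⟩ =
      ∑ n : Fin (k j), gradient L u ⟨j, n⟩ * u ⟨j, n⟩ := by
  classical
  set a : EuclideanSpace ℝ ((i : Fin N) × Fin (k i)) :=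
    WithLp.toLp 2 (fun p => if p.1 = i then u p else 0) with ha
  set b : EuclideanSpace ℝ ((i : Fin N) × Fin (k i)) :=
    WithLp.toLp 2 (fun p => if p.1 = j then u p else 0) with hb
  set r : EuclideanSpace ℝ ((i : Fin N) × Fin (k i)) :=
    WithLp.toLp 2 (fun p => if p.1 = i then 0 else if p.1 = j then 0 else u p) with hr
  set c : ℝ → EuclideanSpace ℝ ((i : Fin N) × Fin (k i)) :=
    fun κ => κ⁻¹ • a + κ • b + r with hc
  have hcform : ∀ κ : ℝ,
      c κ = WithLp.toLp 2 (fun p => if p.1 = i then u p / κ else if p.1 = j then κ * u p else u p) := by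
    intro κ
    apply PiLp.ext; intro p
    show κ⁻¹ * a p + κ * b p + r p = _
    by_cases h1 : p.1 = i
    · have h2 : ¬ p.1 = j := by rw [h1]; exact hij
      simp [ha, hb, hr, h1, h2, hij, div_eq_inv_mul]
    · by_cases h2 : p.1 = j <;> simp [ha, hb, hr, h1, h2, hij.symm]
  have hc1 : c 1 = u := by
    rw [hcform]; apply PiLp.ext; intro p
    by_cases h1 : p.1 = i
    · simp [h1]
    · by_cases h2 : p.1 = j <;> simp [h1, h2]
  have hder : HasDerivAt c (-a + b) 1 := by
    have h1 : HasDerivAt (fun κ : ℝ => κ⁻¹ • a) ((-1 : ℝ) • a) 1 := by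
      have := HasDerivAt.smul_const (𝕜 := ℝ) (hasDerivAt_inv (one_ne_zero)) a
      simpa using this
    have h2 : HasDerivAt (fun κ : ℝ => κ • b) b 1 := by
      simpa using HasDerivAt.smul_const (𝕜 := ℝ) (hasDerivAt_id (1 : ℝ)) b
    have := (h1.add h2).add_const r
    simpa [neg_one_smul, hc] using this
  have hdiff : DifferentiableAt ℝ L u := (hL.differentiable one_ne_zero).differentiableAt
  have hcomp : HasDerivAt (fun κ => L (c κ)) (fderiv ℝ L u (-a + b)) 1 := by
    rw [← hc1] at hdiff
    have := hdiff.hasFDerivAt.comp_hasDerivAt 1 hder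
    rw [hc1] at this
    exact this
  have hconst : HasDerivAt (fun κ => L (c κ)) 0 1 := by
    have heq : (fun κ => L (c κ)) =ᶠ[nhds (1 : ℝ)] (fun _ => L u) := by
      filter_upwards [eventually_gt_nhds (show (0:ℝ) < 1 by norm_num)] with κ hκ
      rw [hcform]; exact hinv i j hij κ hκ u
    exact (hasDerivAt_const 1 (L u)).congr_of_eventuallyEq heq
  have hzero : fderiv ℝ L u (-a + b) = 0 := hcomp.unique hconst
  have hgrad : fderiv ℝ L u (-a + b) = ⟪gradient L u, -a + b⟫ := by
    rw [hdiff.hasGradientAt.hasFDerivAt.fderiv]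
    exact InnerProductSpace.toDual_apply_apply
  rw [hgrad] at hzero
  have hin : ⟪gradient L u, -a + b⟫ =
      -(∑ n : Fin (k i), gradient L u ⟨i, n⟩ * u ⟨i, n⟩) +
        ∑ n : Fin (k j), gradient L u ⟨j, n⟩ * u ⟨j, n⟩ := by
    rw [PiLp.inner_apply]
    have hpt : ∀ p : (i : Fin N) × Fin (k i),
        gradient L u p * (-a + b) p =
          (if p.1 = i then -(gradient L u p * u p) else 0) +
            (if p.1 = j then gradient L u p * u p else 0) := by
      intro p
      show gradient L u p * (-a p + b p) = _
      by_cases h1 : p.1 = i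
      · have h2 : ¬ p.1 = j := by rw [h1]; exact hij
        simp [ha, hb, h1, h2, hij]
      · by_cases h2 : p.1 = j <;> simp [ha, hb, h1, h2, hij.symm]
    simp only [RCLike.inner_apply, conj_trivial]
    rw [Finset.sum_congr rfl (fun p _ => (mul_comm _ _).trans (hpt p)), Finset.sum_add_distrib]
    rw [← Finset.univ_sigma_univ, Finset.sum_sigma, Finset.sum_sigma]
    congr 1
    · have h1 : ∀ x ∈ (Finset.univ : Finset (Fin N)),
          (∑ s : Fin (k x), if (⟨x, s⟩ : (i : Fin N) × Fin (k i)).fst = i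
              then -(gradient L u ⟨x, s⟩ * u ⟨x, s⟩) else 0)
            = (if x = i then -(∑ n : Fin (k i), gradient L u ⟨i, n⟩ * u ⟨i, n⟩) else 0) := by
        intro x _
        by_cases hx : x = i
        · subst hx; simp
        · simp [hx]
      rw [Finset.sum_congr rfl h1]
      simp [Finset.sum_ite_eq']
    · have h1 : ∀ x ∈ (Finset.univ : Finset (Fin N)),
          (∑ s : Fin (k x), if (⟨x, s⟩ : (i : Fin N) × Fin (k i)).fst = j
              then gradient L u ⟨x, s⟩ * u ⟨x, s⟩ else 0)
            = (if x = j then (∑ n : Fin (k j), gradient L u ⟨j, n⟩ * u ⟨j, n⟩) else 0) := by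
        intro x _
        by_cases hx : x = j
        · subst hx; simp
        · simp [hx]
      rw [Finset.sum_congr rfl h1]
      simp [Finset.sum_ite_eq']
  rw [hin] at hzero
  linarith

/-- Balancedness: if `L` is a C¹ loss on the concatenated filter space of an LCN
that is invariant under the rescalings `(w^(i), w^(j)) ↦ ((1/κ) w^(i), κ w^(j))`
for `κ > 0`, and `w(t)` solves the gradient flow `dw/dt = -∇L(w(t))` on an
interval `I`, then `δ_ij(t) = ‖w^(i)(t)‖₂² - ‖w^(j)(t)‖₂²` is constant on `I`. -/
theorem stmt_7 (N : ℕ) (k : Fin N → ℕ)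
    (L : EuclideanSpace ℝ ((i : Fin N) × Fin (k i)) → ℝ)
    (hL : ContDiff ℝ 1 L)
    (hinv : ∀ (i j : Fin N), i ≠ j → ∀ κ : ℝ, 0 < κ →
      ∀ u : EuclideanSpace ℝ ((i : Fin N) × Fin (k i)),
        L (WithLp.toLp 2 (fun p => if p.1 = i then u p / κ else if p.1 = j then κ * u p else u p)) = L u)
    (I : Set ℝ) (hI : Convex ℝ I)
    (w : ℝ → EuclideanSpace ℝ ((i : Fin N) × Fin (k i)))
    (hw : ∀ t ∈ I, HasDerivAt w (-(gradient L (w t))) t) :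
    ∀ (i j : Fin N), ∀ t₁ ∈ I, ∀ t₂ ∈ I,
      (∑ n : Fin (k i), (w t₁ ⟨i, n⟩) ^ 2) - (∑ n : Fin (k j), (w t₁ ⟨j, n⟩) ^ 2) =
        (∑ n : Fin (k i), (w t₂ ⟨i, n⟩) ^ 2) - (∑ n : Fin (k j), (w t₂ ⟨j, n⟩) ^ 2) := by
  intro i j t₁ ht₁ t₂ ht₂
  by_cases hij : i = j
  · subst hij; ring
  set g : ℝ → ℝ := fun t =>
    (∑ n : Fin (k i), (w t ⟨i, n⟩) ^ 2) - (∑ n : Fin (k j), (w t ⟨j, n⟩) ^ 2) with hg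
  have hcomp : ∀ t ∈ I, ∀ p : (i : Fin N) × Fin (k i),
      HasDerivAt (fun s => w s p) (-(gradient L (w t)) p) t := by
    intro t ht p
    exact ((EuclideanSpace.proj p).hasFDerivAt.comp_hasDerivAt t (hw t ht))
  have hgd : ∀ t ∈ I, HasDerivAt g 0 t := by
    intro t ht
    have hsum : ∀ m : Fin N, HasDerivAt (fun s => ∑ n : Fin (k m), (w s ⟨m, n⟩) ^ 2)
        (∑ n : Fin (k m), 2 * (w t ⟨m, n⟩) * (-(gradient L (w t)) ⟨m, n⟩)) t := by
      intro m
      apply HasDerivAt.fun_sum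
      intro n _
      have := (hcomp t ht ⟨m, n⟩).fun_pow 2
      simpa [mul_comm, mul_assoc, mul_left_comm] using this
    have := (hsum i).sub (hsum j)
    have hz : (∑ n : Fin (k i), 2 * (w t ⟨i, n⟩) * (-(gradient L (w t)) ⟨i, n⟩)) -
        (∑ n : Fin (k j), 2 * (w t ⟨j, n⟩) * (-(gradient L (w t)) ⟨j, n⟩)) = 0 := by
      have hk := key_bal hL hinv i j hij (w t)
      have e1 : ∀ m : Fin N, (∑ n : Fin (k m), 2 * (w t ⟨m, n⟩) * (-(gradient L (w t)) ⟨m, n⟩))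
          = -2 * ∑ n : Fin (k m), gradient L (w t) ⟨m, n⟩ * (w t ⟨m, n⟩) := by
        intro m
        rw [Finset.mul_sum]
        apply Finset.sum_congr rfl
        intro n _
        show 2 * (w t ⟨m, n⟩) * (-(gradient L (w t) ⟨m, n⟩)) = _
        ring
      rw [e1 i, e1 j, hk]
      ring
    rw [hz] at this
    exact this
  have hb := hI.norm_image_sub_le_of_norm_hasDerivWithin_le
    (C := 0) (f' := fun _ => (0 : ℝ)) (fun x hx => (hgd x hx).hasDerivWithinAt)
    (fun x _ => by simp) ht₁ ht₂
  have : ‖g t₂ - g t₁‖ ≤ 0 := by simpa using hb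
  have : g t₂ = g t₁ := by
    have := norm_le_zero_iff.mp this
    linarith [sub_eq_zero.mp this]
  exact this.symm
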